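/- Let Θ = (θ_1,…,θ_N) ∈ ℝ^{Nm} with θ_k ∈ ℝ^m, let λ_0,…,λ_N ∈ ℝ^n be defined by λ_N = 0 and λ_{k−1} = Aᵀλ_k + Cᵀθ_k for k = 1,…,N, and let x̂_0,…,x̂_N be defined by x̂_0 = x̄_0 + P⁻¹Aᵀλ_0 and x̂_{k+1} = A x̂_k + B Q⁻¹Bᵀλ_k for k = 0,…,N−1. Then Θᵀ · stack(C x̂_1,…,C x̂_N) = Θᵀ F Q_inv Fᵀ Θ + Θᵀ O P⁻¹ Oᵀ Θ + Θᵀ O x̄_0, where stack(C x̂_1,…,C x̂_N) ∈ ℝ^{Nm} is the vertical stack of the vectors C x̂_k. -/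
import Mathlib


open Matrix

/-- State trajectory generated by `x_{k+1} = A x_k + B w_k` from initial state `x0`. -/
def traj {n l : ℕ} (A : Matrix (Fin n) (Fin n) ℝ) (B : Matrix (Fin n) (Fin l) ℝ)
    (x0 : Fin n → ℝ) (w : ℕ → Fin l → ℝ) : ℕ → Fin n → ℝ
  | 0 => x0
  | k + 1 => A *ᵥ traj A B x0 w k + B *ᵥ w k

/-- The block lower-triangular matrix `F` whose `(k, i)` block is `C A^{k−1−i} B`. -/
def Fmat {n l m : ℕ} (N : ℕ) (A : Matrix (Fin n) (Fin n) ℝ) (B : Matrix (Fin n) (Fin l) ℝ)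
    (C : Matrix (Fin m) (Fin n) ℝ) : Matrix (Fin N × Fin m) (Fin N × Fin l) ℝ :=
  fun p q => if (q.1 : ℕ) ≤ (p.1 : ℕ) then (C * A ^ ((p.1 : ℕ) - (q.1 : ℕ)) * B) p.2 q.2 else 0

/-- Block-diagonal matrix with `N` diagonal blocks `Q⁻¹`. -/
noncomputable def Qinv {l : ℕ} (N : ℕ) (Q : Matrix (Fin l) (Fin l) ℝ) :
    Matrix (Fin N × Fin l) (Fin N × Fin l) ℝ :=
  fun p q => if p.1 = q.1 then Q⁻¹ p.2 q.2 else 0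

/-- The vertical stack `O` of `C A, C A², …, C A^N`. -/
def Omat {n m : ℕ} (N : ℕ) (A : Matrix (Fin n) (Fin n) ℝ) (C : Matrix (Fin m) (Fin n) ℝ) :
    Matrix (Fin N × Fin m) (Fin n) ℝ :=
  fun p c => (C * A ^ ((p.1 : ℕ) + 1)) p.2 c

lemma mulVec_sum' {a b : ℕ} {ι : Type*} (M : Matrix (Fin a) (Fin b) ℝ) (s : Finset ι)
    (f : ι → Fin b → ℝ) : M *ᵥ (∑ i ∈ s, f i) = ∑ i ∈ s, M *ᵥ f i := by
  ext j
  simp [Matrix.mulVec, dotProduct, Finset.mul_sum, Finset.sum_apply]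
  rw [Finset.sum_comm]

lemma lam_formula {n m : ℕ} (N : ℕ) (A : Matrix (Fin n) (Fin n) ℝ) (C : Matrix (Fin m) (Fin n) ℝ)
    (Θ : Fin N × Fin m → ℝ) (lam : ℕ → Fin n → ℝ) (hlamN : lam N = 0)
    (hlam : ∀ k : Fin N, lam (k:ℕ) = Aᵀ *ᵥ lam ((k:ℕ)+1) + Cᵀ *ᵥ (fun r => Θ (k,r))) :
    ∀ k, k ≤ N → lam k = ∑ j : Fin N,
      (if k ≤ (j:ℕ) then ((Aᵀ)^((j:ℕ) - k) * Cᵀ) *ᵥ (fun r => Θ (j,r)) else 0) := by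
  have key : ∀ d k, k + d = N → lam k = ∑ j : Fin N,
      (if k ≤ (j:ℕ) then ((Aᵀ)^((j:ℕ) - k) * Cᵀ) *ᵥ (fun r => Θ (j,r)) else 0) := by
    intro d
    induction d with
    | zero =>
      intro k hk
      have hkN : k = N := by omega
      subst hkN
      rw [hlamN]
      symm
      apply Finset.sum_eq_zero
      intro j _
      have : ¬ (k ≤ (j:ℕ)) := by have := j.isLt; omega
      simp [this]
    | succ d ih =>
      intro k hk
      have hkN : k < N := by omega
      have h1 := hlam ⟨k, hkN⟩
      simp only [Fin.val_mk] at h1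
      rw [h1, ih (k+1) (by omega), mulVec_sum']
      have step : ∀ j : Fin N,
          Aᵀ *ᵥ (if k + 1 ≤ (j:ℕ) then ((Aᵀ)^((j:ℕ) - (k+1)) * Cᵀ) *ᵥ (fun r => Θ (j,r)) else 0)
          = (if k + 1 ≤ (j:ℕ) then ((Aᵀ)^((j:ℕ) - k) * Cᵀ) *ᵥ (fun r => Θ (j,r)) else 0) := by
        intro j
        split_ifs with h
        · rw [mulVec_mulVec, ← Matrix.mul_assoc, ← pow_succ']
          have he : (j:ℕ) - (k+1) + 1 = (j:ℕ) - k := by omega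
          rw [he]
        · simp
      rw [Finset.sum_congr rfl (fun j _ => step j)]
      have split : ∀ j : Fin N,
          (if k ≤ (j:ℕ) then ((Aᵀ)^((j:ℕ) - k) * Cᵀ) *ᵥ (fun r => Θ (j,r)) else 0)
          = (if k + 1 ≤ (j:ℕ) then ((Aᵀ)^((j:ℕ) - k) * Cᵀ) *ᵥ (fun r => Θ (j,r)) else 0)
            + (if j = ⟨k, hkN⟩ then Cᵀ *ᵥ (fun r => Θ (j,r)) else 0) := by
        intro j
        rcases lt_trichotomy (j:ℕ) k with h | h | h
        · have h1 : ¬ (k ≤ (j:ℕ)) := by omega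
          have h2 : ¬ (k + 1 ≤ (j:ℕ)) := by omega
          have h3 : j ≠ ⟨k, hkN⟩ := by intro he; rw [he] at h; simp at h
          simp [h1, h2, h3]
        · have h1 : k ≤ (j:ℕ) := by omega
          have h2 : ¬ (k + 1 ≤ (j:ℕ)) := by omega
          have h3 : j = ⟨k, hkN⟩ := by apply Fin.ext; simpa using h
          simp [h1, h2, h3, h]
        · have h1 : k ≤ (j:ℕ) := by omega
          have h2 : k + 1 ≤ (j:ℕ) := by omega
          have h3 : j ≠ ⟨k, hkN⟩ := by intro he; rw [he] at h; simp at h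
          simp [h1, h2, h3]
      rw [Finset.sum_congr rfl (fun j _ => split j), Finset.sum_add_distrib,
        Finset.sum_ite_eq' Finset.univ (⟨k, hkN⟩ : Fin N)]
      simp [add_comm]
  intro k hk
  exact key (N - k) k (by omega)

lemma state_formula {n l : ℕ} (N : ℕ) (A : Matrix (Fin n) (Fin n) ℝ) (B : Matrix (Fin n) (Fin l) ℝ)
    (xhat : ℕ → Fin n → ℝ) (u : ℕ → Fin l → ℝ)
    (hxhat : ∀ k < N, xhat (k + 1) = A *ᵥ xhat k + B *ᵥ u k) :
    ∀ k, k < N → xhat (k+1) = (A^(k+1)) *ᵥ xhat 0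
      + ∑ i ∈ Finset.range (k+1), (A^(k-i) * B) *ᵥ u i := by
  intro k
  induction k with
  | zero =>
    intro h0
    rw [hxhat 0 h0]
    simp
  | succ k ih =>
    intro hk
    rw [hxhat (k+1) hk, ih (by omega), mulVec_add, mulVec_sum']
    conv_rhs => rw [Finset.sum_range_succ]
    have hterm : (A ^ (k + 1 - (k+1)) * B) = B := by
      rw [Nat.sub_self, pow_zero, Matrix.one_mul]
    rw [hterm]
    have hsum : ∑ i ∈ Finset.range (k+1), A *ᵥ (A^(k-i)*B) *ᵥ u i
        = ∑ i ∈ Finset.range (k+1), (A^(k+1-i)*B) *ᵥ u i := by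
      apply Finset.sum_congr rfl
      intro i hi
      simp only [Finset.mem_range] at hi
      rw [mulVec_mulVec, ← Matrix.mul_assoc, ← pow_succ']
      have he : k - i + 1 = k + 1 - i := by omega
      rw [he]
    rw [hsum, mulVec_mulVec, ← pow_succ']
    abel

lemma FT_mulVec {n l m N : ℕ} (A : Matrix (Fin n) (Fin n) ℝ) (B : Matrix (Fin n) (Fin l) ℝ)
    (C : Matrix (Fin m) (Fin n) ℝ) (Θ : Fin N × Fin m → ℝ) (lam : ℕ → Fin n → ℝ)
    (hl : ∀ k, k ≤ N → lam k = ∑ j : Fin N,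
      (if k ≤ (j:ℕ) then ((Aᵀ)^((j:ℕ) - k) * Cᵀ) *ᵥ (fun r => Θ (j,r)) else 0)) :
    (Fmat N A B C)ᵀ *ᵥ Θ = fun q : Fin N × Fin l => (Bᵀ *ᵥ lam (q.1:ℕ)) q.2 := by
  funext q
  obtain ⟨i, s⟩ := q
  show _ = (Bᵀ *ᵥ lam (i:ℕ)) s
  rw [hl i (le_of_lt i.isLt), mulVec_sum']
  have hterm : ∀ j : Fin N,
      Bᵀ *ᵥ (if (i:ℕ) ≤ (j:ℕ) then ((Aᵀ)^((j:ℕ) - (i:ℕ)) * Cᵀ) *ᵥ (fun r => Θ (j,r)) else 0)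
      = (if (i:ℕ) ≤ (j:ℕ) then (C * A ^ ((j:ℕ) - (i:ℕ)) * B)ᵀ *ᵥ (fun r => Θ (j,r)) else 0) := by
    intro j
    split_ifs with h
    · rw [mulVec_mulVec, Matrix.transpose_mul, Matrix.transpose_mul, Matrix.transpose_pow]
    · simp
  rw [Finset.sum_congr rfl (fun j _ => hterm j), Finset.sum_apply]
  simp only [Matrix.mulVec, dotProduct, Matrix.transpose_apply, Fintype.sum_prod_type, Fmat]
  apply Finset.sum_congr rfl
  intro j _
  by_cases h : (i:ℕ) ≤ (j:ℕ)
  · simp [h, Matrix.mulVec, dotProduct, Matrix.transpose_apply]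
  · simp [h]

lemma Qinv_mulVec {l N : ℕ} (Q : Matrix (Fin l) (Fin l) ℝ) (v : Fin N → Fin l → ℝ) :
    Qinv N Q *ᵥ (fun q : Fin N × Fin l => v q.1 q.2)
      = fun q : Fin N × Fin l => (Q⁻¹ *ᵥ v q.1) q.2 := by
  funext q
  obtain ⟨i, s⟩ := q
  simp only [Matrix.mulVec, dotProduct, Fintype.sum_prod_type, Qinv]
  rw [Finset.sum_eq_single i]
  · simp
  · intro j _ hj
    simp [Ne.symm hj]
  · simp

lemma F_mulVec {n l m N : ℕ} (A : Matrix (Fin n) (Fin n) ℝ) (B : Matrix (Fin n) (Fin l) ℝ)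
    (C : Matrix (Fin m) (Fin n) ℝ) (u : ℕ → Fin l → ℝ) :
    Fmat N A B C *ᵥ (fun q : Fin N × Fin l => u (q.1:ℕ) q.2)
      = fun p : Fin N × Fin m =>
        (∑ i ∈ Finset.range ((p.1:ℕ)+1), (C * A ^ ((p.1:ℕ) - i) * B) *ᵥ u i) p.2 := by
  funext p
  obtain ⟨k, r⟩ := p
  simp only [Matrix.mulVec, dotProduct, Fintype.sum_prod_type, Fmat, Finset.sum_apply]
  have h1 : ∀ i : Fin N, (∑ s : Fin l,
      (if (i:ℕ) ≤ (k:ℕ) then (C * A ^ ((k:ℕ) - (i:ℕ)) * B) r s else 0) * u (i:ℕ) s)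
      = (if (i:ℕ) ≤ (k:ℕ) then ((C * A ^ ((k:ℕ) - (i:ℕ)) * B) *ᵥ u (i:ℕ)) r else 0) := by
    intro i
    split_ifs with h
    · simp [Matrix.mulVec, dotProduct]
    · simp
  rw [Finset.sum_congr rfl (fun i _ => h1 i)]
  rw [Fin.sum_univ_eq_sum_range
    (fun i => if i ≤ (k:ℕ) then ((C * A ^ ((k:ℕ) - i) * B) *ᵥ u i) r else 0) N]
  rw [← Finset.sum_subset (Finset.range_subset_range.2 (by omega : (k:ℕ)+1 ≤ N))
    (fun x _ hx => by
      simp only [Finset.mem_range, not_lt] at hx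
      have : ¬ (x ≤ (k:ℕ)) := by omega
      simp [this])]
  apply Finset.sum_congr rfl
  intro i hi
  simp only [Finset.mem_range] at hi
  have : i ≤ (k:ℕ) := by omega
  simp [this, Matrix.mulVec, dotProduct]

lemma OT_mulVec {n m N : ℕ} (A : Matrix (Fin n) (Fin n) ℝ) (C : Matrix (Fin m) (Fin n) ℝ)
    (Θ : Fin N × Fin m → ℝ) (lam : ℕ → Fin n → ℝ)
    (hl : ∀ k, k ≤ N → lam k = ∑ j : Fin N,
      (if k ≤ (j:ℕ) then ((Aᵀ)^((j:ℕ) - k) * Cᵀ) *ᵥ (fun r => Θ (j,r)) else 0)) :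
    (Omat N A C)ᵀ *ᵥ Θ = Aᵀ *ᵥ lam 0 := by
  rw [hl 0 (Nat.zero_le N), mulVec_sum']
  have hterm : ∀ j : Fin N,
      Aᵀ *ᵥ (if (0:ℕ) ≤ (j:ℕ) then ((Aᵀ)^((j:ℕ) - 0) * Cᵀ) *ᵥ (fun r => Θ (j,r)) else 0)
      = (C * A ^ ((j:ℕ) + 1))ᵀ *ᵥ (fun r => Θ (j,r)) := by
    intro j
    rw [if_pos (Nat.zero_le _), Nat.sub_zero, mulVec_mulVec, ← Matrix.mul_assoc, ← pow_succ',
      Matrix.transpose_mul, Matrix.transpose_pow]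
  rw [Finset.sum_congr rfl (fun j _ => hterm j)]
  funext c
  rw [Finset.sum_apply]
  simp only [Matrix.mulVec, dotProduct, Matrix.transpose_apply, Fintype.sum_prod_type, Omat]

/-- **Identity (25): `Θᵀ stack(C x̂_1, …, C x̂_N) = ΘᵀFQ_invFᵀΘ + ΘᵀOP⁻¹OᵀΘ + ΘᵀO x̄_0`**
for the trajectory generated from the costate recursion driven by `Θ`. -/
theorem theta_dot_stacked_Cx
    (n l m N : ℕ) (hN : 1 ≤ N)
    (A : Matrix (Fin n) (Fin n) ℝ) (B : Matrix (Fin n) (Fin l) ℝ)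
    (C : Matrix (Fin m) (Fin n) ℝ)
    (P : Matrix (Fin n) (Fin n) ℝ) (Q : Matrix (Fin l) (Fin l) ℝ)
    (hP : IsUnit P.det) (hQ : IsUnit Q.det)
    (xbar : Fin n → ℝ)
    (Θ : Fin N × Fin m → ℝ)
    (lam : ℕ → Fin n → ℝ)
    (hlamN : lam N = 0)
    (hlam : ∀ k : Fin N,
      lam (k : ℕ) = Aᵀ *ᵥ lam ((k : ℕ) + 1) + Cᵀ *ᵥ (fun r => Θ (k, r)))
    (xhat : ℕ → Fin n → ℝ)
    (hxhat0 : xhat 0 = xbar + P⁻¹ *ᵥ (Aᵀ *ᵥ lam 0))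
    (hxhat : ∀ k < N, xhat (k + 1) = A *ᵥ xhat k + B *ᵥ (Q⁻¹ *ᵥ (Bᵀ *ᵥ lam k))) :
    Θ ⬝ᵥ (fun q : Fin N × Fin m => (C *ᵥ xhat ((q.1 : ℕ) + 1)) q.2)
      = Θ ⬝ᵥ (Fmat N A B C * Qinv N Q * (Fmat N A B C)ᵀ) *ᵥ Θ
        + Θ ⬝ᵥ (Omat N A C * P⁻¹ * (Omat N A C)ᵀ) *ᵥ Θ
        + Θ ⬝ᵥ (Omat N A C *ᵥ xbar) := by
  have hl := lam_formula N A C Θ lam hlamN hlam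
  have hst := state_formula N A B xhat (fun i => Q⁻¹ *ᵥ (Bᵀ *ᵥ lam i)) hxhat
  have hOapp : ∀ (w : Fin n → ℝ) (p : Fin N × Fin m),
      (Omat N A C *ᵥ w) p = ((C * A ^ ((p.1:ℕ) + 1)) *ᵥ w) p.2 := fun w p => rfl
  have e1 : (Fmat N A B C)ᵀ *ᵥ Θ = fun q : Fin N × Fin l => (Bᵀ *ᵥ lam (q.1:ℕ)) q.2 :=
    FT_mulVec A B C Θ lam hl
  have e2 : Qinv N Q *ᵥ (fun q : Fin N × Fin l => (Bᵀ *ᵥ lam (q.1:ℕ)) q.2)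
      = fun q : Fin N × Fin l => (Q⁻¹ *ᵥ (Bᵀ *ᵥ lam (q.1:ℕ))) q.2 :=
    Qinv_mulVec Q (fun j => Bᵀ *ᵥ lam (j:ℕ))
  have e3 : Fmat N A B C *ᵥ (fun q : Fin N × Fin l => (Q⁻¹ *ᵥ (Bᵀ *ᵥ lam (q.1:ℕ))) q.2)
      = fun p : Fin N × Fin m =>
        (∑ i ∈ Finset.range ((p.1:ℕ)+1),
          (C * A ^ ((p.1:ℕ) - i) * B) *ᵥ (Q⁻¹ *ᵥ (Bᵀ *ᵥ lam i))) p.2 :=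
    F_mulVec A B C (fun i => Q⁻¹ *ᵥ (Bᵀ *ᵥ lam i))
  have hF : (Fmat N A B C * Qinv N Q * (Fmat N A B C)ᵀ) *ᵥ Θ
      = fun p : Fin N × Fin m =>
        (∑ i ∈ Finset.range ((p.1:ℕ)+1),
          (C * A ^ ((p.1:ℕ) - i) * B) *ᵥ (Q⁻¹ *ᵥ (Bᵀ *ᵥ lam i))) p.2 := by
    rw [← mulVec_mulVec, ← mulVec_mulVec, e1, e2, e3]
  have hO : (Omat N A C * P⁻¹ * (Omat N A C)ᵀ) *ᵥ Θ
      = Omat N A C *ᵥ (P⁻¹ *ᵥ (Aᵀ *ᵥ lam 0)) := by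
    rw [← mulVec_mulVec, ← mulVec_mulVec, OT_mulVec A C Θ lam hl]
  have main : (fun q : Fin N × Fin m => (C *ᵥ xhat ((q.1 : ℕ) + 1)) q.2)
      = ((Fmat N A B C * Qinv N Q * (Fmat N A B C)ᵀ) *ᵥ Θ
          + (Omat N A C * P⁻¹ * (Omat N A C)ᵀ) *ᵥ Θ)
        + (Omat N A C *ᵥ xbar) := by
    funext q
    obtain ⟨k, r⟩ := q
    have hsum : C *ᵥ (∑ i ∈ Finset.range ((k:ℕ)+1), (A ^ ((k:ℕ) - i) * B) *ᵥ
          (Q⁻¹ *ᵥ (Bᵀ *ᵥ lam i)))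
        = ∑ i ∈ Finset.range ((k:ℕ)+1), (C * A ^ ((k:ℕ) - i) * B) *ᵥ
          (Q⁻¹ *ᵥ (Bᵀ *ᵥ lam i)) := by
      rw [mulVec_sum']
      exact Finset.sum_congr rfl (fun i _ => by rw [mulVec_mulVec, ← Matrix.mul_assoc])
    show (C *ᵥ xhat ((k:ℕ) + 1)) r = _
    rw [hst (k:ℕ) k.isLt, mulVec_add, mulVec_mulVec, hxhat0, mulVec_add, hsum]
    simp only [Pi.add_apply, hF, hO, hOapp, Finset.sum_apply]
    ring
  rw [main, dotProduct_add, dotProduct_add]
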